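/- For every K ∈ 𝓛 there are pairwise disjoint sets L_n ∈ 𝓛 (n ∈ ω) such that ⋃_{n∈ω} L_n ⊆ K and every L_n is dense in K with respect to the Euclidean subspace topology on K. -/

import Mathlib

open Set Filter MeasureTheory
open scoped ENNReal NNReal

/-- The family `𝓛` of all nonempty Lebesgue measurable sets `K ⊆ ℝ` such that every open
set meeting `K` does so in positive Lebesgue measure. -/
def MemCalL (K : Set ℝ) : Prop :=
  K.Nonempty ∧ NullMeasurableSet K volume ∧
    ∀ U : Set ℝ, IsOpen U → (K ∩ U = ∅ ∨ 0 < volume (K ∩ U))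

/-- A null-measurable set of positive measure contains a measurable subset of arbitrarily
small positive measure. -/
lemma small_sub_aux (s : Set ℝ) (hs : NullMeasurableSet s volume) (hpos : 0 < volume s)
    {δ : ℝ≥0∞} (hδ : 0 < δ) :
    ∃ t, t ⊆ s ∧ MeasurableSet t ∧ 0 < volume t ∧ volume t < δ := by
  obtain ⟨m, hms, hmm, hme⟩ := hs.exists_measurable_subset_ae_eq
  have hmv : volume m = volume s := measure_congr hme
  obtain ⟨r, hr0, hrδ⟩ := ENNReal.lt_iff_exists_nnreal_btwn.1 hδ
  have hrpos : (0 : ℝ) < (r : ℝ) := by exact_mod_cast hr0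
  -- cover ℝ by intervals of length r
  have hcover : m ⊆ ⋃ k : ℤ, m ∩ Ico ((k : ℝ) * r) ((k + 1 : ℝ) * r) := by
    intro x hx
    refine mem_iUnion.2 ⟨⌊x / (r : ℝ)⌋, hx, ?_, ?_⟩
    · have := Int.floor_le (x / (r : ℝ))
      calc (⌊x / (r : ℝ)⌋ : ℝ) * r ≤ (x / r) * r := by
            exact mul_le_mul_of_nonneg_right this hrpos.le
        _ = x := by field_simp
    · have := Int.lt_floor_add_one (x / (r : ℝ))
      have h2 : x / (r : ℝ) * r < ((⌊x / (r : ℝ)⌋ : ℝ) + 1) * r :=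
        mul_lt_mul_of_pos_right this hrpos
      calc x = x / (r : ℝ) * r := by field_simp
        _ < _ := h2
  have : ∃ k : ℤ, 0 < volume (m ∩ Ico ((k : ℝ) * r) ((k + 1 : ℝ) * r)) := by
    by_contra h
    push_neg at h
    have h0 : ∀ k : ℤ, volume (m ∩ Ico ((k : ℝ) * r) ((k + 1 : ℝ) * r)) = 0 :=
      fun k => le_antisymm (h k) (zero_le)
    have : volume m = 0 :=
      le_antisymm (le_trans (measure_mono hcover) (le_of_eq (measure_iUnion_null h0)))
        (zero_le)
    rw [hmv] at this
    exact hpos.ne' this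
  obtain ⟨k, hk⟩ := this
  refine ⟨m ∩ Ico ((k : ℝ) * r) ((k + 1 : ℝ) * r), fun x hx => hms hx.1,
    hmm.inter measurableSet_Ico, hk, ?_⟩
  have : volume (m ∩ Ico ((k : ℝ) * r) ((k + 1 : ℝ) * r)) ≤
      volume (Ico ((k : ℝ) * r) ((k + 1 : ℝ) * r)) := measure_mono inter_subset_right
  rw [Real.volume_Ico] at this
  have heq : ((k : ℝ) + 1) * r - (k : ℝ) * r = (r : ℝ) := by ring
  rw [heq] at this
  calc volume (m ∩ Ico ((k : ℝ) * r) ((k + 1 : ℝ) * r)) ≤ ENNReal.ofReal (r : ℝ) := this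
    _ = (r : ℝ≥0∞) := by simp [ENNReal.ofReal_coe_nnreal]
    _ < δ := hrδ

/-- Key step: inside a null-measurable set `R` of positive measure one can find a measurable
subset `A` of positive measure that leaves each member of a countable family of positive
measure sets with positive measure outside `A`. -/
lemma stepA (R : Set ℝ) (hR : NullMeasurableSet R volume) (hRpos : 0 < volume R)
    (E : ℕ → Set ℝ) (hE : ∀ k, NullMeasurableSet (E k) volume) :
    ∃ A, MeasurableSet A ∧ A ⊆ R ∧ 0 < volume A ∧
      ∀ k, 0 < volume (E k) → 0 < volume (E k \ A) := by
  -- find a bounded piece of R with positive measure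
  have hcover : R ⊆ ⋃ n : ℕ, R ∩ Ioo (-(n : ℝ) - 1) ((n : ℝ) + 1) := by
    intro x hx
    refine mem_iUnion.2 ⟨⌈|x|⌉₊, hx, ?_, ?_⟩
    · have h1 : |x| ≤ (⌈|x|⌉₊ : ℝ) := Nat.le_ceil _
      have h2 : -(⌈|x|⌉₊ : ℝ) ≤ x := by
        have := neg_abs_le x; linarith
      linarith
    · have h1 : |x| ≤ (⌈|x|⌉₊ : ℝ) := Nat.le_ceil _
      have := le_abs_self x; linarith
  have : ∃ n : ℕ, 0 < volume (R ∩ Ioo (-(n : ℝ) - 1) ((n : ℝ) + 1)) := by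
    by_contra h
    push_neg at h
    have h0 : ∀ n : ℕ, volume (R ∩ Ioo (-(n : ℝ) - 1) ((n : ℝ) + 1)) = 0 :=
      fun n => le_antisymm (h n) (zero_le)
    have : volume R = 0 :=
      le_antisymm (le_trans (measure_mono hcover) (le_of_eq (measure_iUnion_null h0)))
        (zero_le)
    exact hRpos.ne' this
  obtain ⟨n, hn⟩ := this
  set R' : Set ℝ := R ∩ Ioo (-(n : ℝ) - 1) ((n : ℝ) + 1) with hR'def
  have hR'nm : NullMeasurableSet R' volume := hR.inter measurableSet_Ioo.nullMeasurableSet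
  obtain ⟨m', hm's, hm'm, hm'e⟩ := hR'nm.exists_measurable_subset_ae_eq
  have hm'v : volume m' = volume R' := measure_congr hm'e
  set δ : ℝ≥0∞ := volume R' with hδdef
  have hδpos : 0 < δ := hn
  have hδfin : δ < ⊤ := by
    calc δ ≤ volume (Ioo (-(n : ℝ) - 1) ((n : ℝ) + 1)) := measure_mono inter_subset_right
      _ < ⊤ := measure_Ioo_lt_top
  -- choose small pieces inside each E k
  have hGex : ∀ k : ℕ, ∃ G : Set ℝ, MeasurableSet G ∧ G ⊆ E k ∧
      (0 < volume (E k) → 0 < volume G) ∧ volume G < δ * 2⁻¹ ^ (k + 2) := by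
    intro k
    by_cases hk : 0 < volume (E k)
    · have hb : 0 < δ * 2⁻¹ ^ (k + 2) := by
        refine ENNReal.mul_pos hδpos.ne' ?_
        exact (ENNReal.pow_pos (by norm_num) _).ne'
      obtain ⟨t, ht1, ht2, ht3, ht4⟩ := small_sub_aux (E k) (hE k) hk hb
      exact ⟨t, ht2, ht1, fun _ => ht3, ht4⟩
    · refine ⟨∅, MeasurableSet.empty, empty_subset _, fun h => absurd h hk, ?_⟩
      simp only [measure_empty]
      exact ENNReal.mul_pos hδpos.ne' (ENNReal.pow_pos (by norm_num) _).ne'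
  choose G hGm hGsub hGpos hGlt using hGex
  set S : Set ℝ := ⋃ k, G k with hSdef
  have hSm : MeasurableSet S := MeasurableSet.iUnion hGm
  have hSv : volume S < δ := by
    have h1 : volume S ≤ ∑' k : ℕ, volume (G k) := measure_iUnion_le _
    have h2 : ∑' k : ℕ, volume (G k) ≤ ∑' k : ℕ, δ * 2⁻¹ ^ (k + 2) :=
      ENNReal.tsum_le_tsum fun k => (hGlt k).le
    have h3 : ∑' k : ℕ, δ * 2⁻¹ ^ (k + 2) = δ * 2⁻¹ := by
      rw [ENNReal.tsum_mul_left]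
      congr 1
      have heq : ∀ k : ℕ, (2⁻¹ : ℝ≥0∞) ^ (k + 2) = 2⁻¹ ^ k * 2⁻¹ ^ 2 := fun k => pow_add _ _ _
      rw [tsum_congr heq, ENNReal.tsum_mul_right, ENNReal.tsum_geometric,
        ENNReal.one_sub_inv_two, inv_inv]
      rw [show ((2:ℝ≥0∞)⁻¹) ^ 2 = 2⁻¹ * 2⁻¹ from sq _, ← mul_assoc,
        ENNReal.mul_inv_cancel (by norm_num) (by norm_num), one_mul]
    have h4 : δ * 2⁻¹ < δ := by
      conv_rhs => rw [← mul_one δ]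
      exact (ENNReal.mul_lt_mul_iff_right hδpos.ne' hδfin.ne).2 (by norm_num)
    exact lt_of_le_of_lt (h1.trans (h2.trans_eq h3)) h4
  refine ⟨m' \ S, hm'm.diff hSm, fun x hx => (hm's hx.1).1, ?_, ?_⟩
  · by_contra h
    have h0 : volume (m' \ S) = 0 := by
      simpa using not_lt.1 h
    have hsub : m' ⊆ (m' \ S) ∪ S := fun x hx => by
      by_cases hxS : x ∈ S
      · exact Or.inr hxS
      · exact Or.inl ⟨hx, hxS⟩
    have : volume m' < volume m' := by
      calc volume m' ≤ volume ((m' \ S) ∪ S) := measure_mono hsub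
        _ ≤ volume (m' \ S) + volume S := measure_union_le _ _
        _ = volume S := by rw [h0, zero_add]
        _ < δ := hSv
        _ = volume m' := hm'v.symm
    exact lt_irrefl _ this
  · intro k hk
    have hGA : G k ⊆ E k \ (m' \ S) := fun x hx =>
      ⟨hGsub k hx, fun hx' => hx'.2 (mem_iUnion.2 ⟨k, hx⟩)⟩
    exact lt_of_lt_of_le (hGpos k hk) (measure_mono hGA)

theorem stmt_11 (K : Set ℝ) (hK : MemCalL K) :
    ∃ L : ℕ → Set ℝ, Pairwise (Function.onFun Disjoint L) ∧
      (∀ n : ℕ, MemCalL (L n)) ∧ (⋃ n : ℕ, L n) ⊆ K ∧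
      ∀ n : ℕ, Dense (Subtype.val ⁻¹' (L n) : Set ↥K) := by
  classical
  obtain ⟨hKne, hKm, hKloc⟩ := hK
  obtain ⟨q, hq⟩ := exists_surjective_nat (ℚ × ℚ)
  set Ik : ℕ → Set ℝ := fun k => Ioo ((q k).1 : ℝ) ((q k).2 : ℝ) with hIkdef
  have hIkopen : ∀ k, IsOpen (Ik k) := fun k => isOpen_Ioo
  have hbasis : ∀ U : Set ℝ, IsOpen U → ∀ x ∈ U, ∃ k, x ∈ Ik k ∧ Ik k ⊆ U := by
    intro U hU x hx
    obtain ⟨ε, hε, hball⟩ := Metric.isOpen_iff.1 hU x hx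
    obtain ⟨a, ha1, ha2⟩ := exists_rat_btwn (show x - ε < x by linarith)
    obtain ⟨b, hb1, hb2⟩ := exists_rat_btwn (show x < x + ε by linarith)
    obtain ⟨k, hk⟩ := hq (a, b)
    have hk1 : ((q k).1 : ℝ) = (a : ℝ) := by rw [hk]
    have hk2 : ((q k).2 : ℝ) = (b : ℝ) := by rw [hk]
    refine ⟨k, ?_, ?_⟩
    · rw [hIkdef]
      exact ⟨by rw [hk1]; exact ha2, by rw [hk2]; exact hb1⟩
    · intro y hy
      rw [hIkdef] at hy
      simp only [mem_Ioo, hk1, hk2] at hy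
      apply hball
      rw [Metric.mem_ball, Real.dist_eq, abs_lt]
      constructor <;> linarith [hy.1, hy.2]
  have hKpos : ∀ k, (K ∩ Ik k).Nonempty → 0 < volume (K ∩ Ik k) := by
    intro k hne
    rcases hKloc (Ik k) (hIkopen k) with h | h
    · exact absurd h hne.ne_empty
    · exact h
  set Inv : Set ℝ → Prop := fun S => MeasurableSet S ∧
    ∀ k, (K ∩ Ik k).Nonempty → 0 < volume ((K ∩ Ik k) \ S) with hInvdef
  have hbase : Inv ∅ := ⟨MeasurableSet.empty, by
    intro k h; rw [diff_empty]; exact hKpos k h⟩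
  have hstep : ∀ S, Inv S → ∀ k₀, ∃ A, MeasurableSet A ∧ A ⊆ (K ∩ Ik k₀) \ S ∧
      ((K ∩ Ik k₀).Nonempty → 0 < volume A) ∧ Inv (S ∪ A) := by
    intro S hS k₀
    by_cases h : (K ∩ Ik k₀).Nonempty
    · have hEnm : ∀ k, NullMeasurableSet ((K ∩ Ik k) \ S) volume := fun k =>
        (hKm.inter (hIkopen k).measurableSet.nullMeasurableSet).diff
          hS.1.nullMeasurableSet
      obtain ⟨A, hA1, hA2, hA3, hA4⟩ := stepA ((K ∩ Ik k₀) \ S) (hEnm k₀) (hS.2 k₀ h)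
        (fun k => (K ∩ Ik k) \ S) hEnm
      refine ⟨A, hA1, hA2, fun _ => hA3, hS.1.union hA1, ?_⟩
      intro k hk
      have := hA4 k (hS.2 k hk)
      rwa [diff_diff] at this
    · refine ⟨∅, MeasurableSet.empty, empty_subset _, fun hc => absurd hc h, ?_⟩
      rw [union_empty]; exact hS
  choose f hf1 hf2 hf3 hf4 using hstep
  let e : ℕ ≃ ℕ × ℕ := Nat.pairEquiv.symm
  let g : ℕ → {S : Set ℝ // Inv S} := fun j =>
    Nat.rec ⟨∅, hbase⟩ (fun j p => ⟨p.1 ∪ f p.1 p.2 (e j).2, hf4 p.1 p.2 (e j).2⟩) j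
  let A : ℕ → Set ℝ := fun j => f (g j).1 (g j).2 (e j).2
  have hgsucc : ∀ j, (g (j+1)).1 = (g j).1 ∪ A j := fun j => rfl
  have hAm : ∀ j, MeasurableSet (A j) := fun j => hf1 _ _ _
  have hAsub : ∀ j, A j ⊆ (K ∩ Ik (e j).2) \ (g j).1 := fun j => hf2 _ _ _
  have hApos : ∀ j, (K ∩ Ik (e j).2).Nonempty → 0 < volume (A j) := fun j => hf3 _ _ _
  have hmono : ∀ i j, i ≤ j → (g i).1 ⊆ (g j).1 := by
    intro i j hij
    induction hij with
    | refl => exact subset_rfl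
    | step h ih => exact ih.trans (by rw [hgsucc]; exact subset_union_left)
  have hdisj : ∀ i j, i < j → Disjoint (A i) (A j) := by
    intro i j hij
    have h1 : A i ⊆ (g j).1 := by
      have h2 : A i ⊆ (g (i+1)).1 := by rw [hgsucc]; exact subset_union_right
      exact h2.trans (hmono _ _ hij)
    exact Set.disjoint_left.2 fun x hxi hxj => (hAsub j hxj).2 (h1 hxi)
  have hdisj' : ∀ i j, i ≠ j → Disjoint (A i) (A j) := by
    intro i j hij
    rcases hij.lt_or_gt with h | h
    · exact hdisj i j h
    · exact (hdisj j i h).symm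
  set L : ℕ → Set ℝ := fun n => ⋃ k, A (e.symm (n, k)) with hLdef
  have hLK : ∀ n, L n ⊆ K := by
    intro n x hx
    obtain ⟨k, hk⟩ := mem_iUnion.1 hx
    exact ((hAsub _ hk).1).1
  have hkey : ∀ n k, (K ∩ Ik k).Nonempty → 0 < volume (L n ∩ Ik k) := by
    intro n k hne
    have hpos : 0 < volume (A (e.symm (n, k))) := by
      apply hApos
      rw [e.apply_symm_apply]
      exact hne
    refine hpos.trans_le (measure_mono ?_)
    intro x hx
    refine ⟨mem_iUnion.2 ⟨k, hx⟩, ?_⟩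
    have h2 := (hAsub _ hx).1
    rw [e.apply_symm_apply] at h2
    exact h2.2
  have hLU : ∀ n (U : Set ℝ), IsOpen U → (K ∩ U).Nonempty → 0 < volume (L n ∩ U) := by
    intro n U hU ⟨x, hxK, hxU⟩
    obtain ⟨k, hxk, hkU⟩ := hbasis U hU x hxU
    have := hkey n k ⟨x, hxK, hxk⟩
    exact this.trans_le (measure_mono (inter_subset_inter_right _ hkU))
  refine ⟨L, ?_, ?_, ?_, ?_⟩
  · -- pairwise disjoint
    intro n m hnm
    refine Set.disjoint_iUnion_left.2 fun k₁ => Set.disjoint_iUnion_right.2 fun k₂ => ?_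
    apply hdisj'
    intro hcontra
    exact hnm (Prod.ext_iff.1 (e.symm.injective hcontra)).1
  · -- MemCalL
    intro n
    have hLm : MeasurableSet (L n) := MeasurableSet.iUnion fun k => hAm _
    refine ⟨?_, hLm.nullMeasurableSet, ?_⟩
    · obtain ⟨x, hx⟩ := hKne
      have := hLU n univ isOpen_univ ⟨x, hx, trivial⟩
      have hne := nonempty_of_measure_ne_zero this.ne'
      rw [inter_univ] at hne
      exact hne
    · intro U hU
      by_cases h : L n ∩ U = ∅
      · exact Or.inl h
      · refine Or.inr ?_
        obtain ⟨x, hxL, hxU⟩ := nonempty_iff_ne_empty.2 h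
        exact hLU n U hU ⟨x, hLK n hxL, hxU⟩
  · exact iUnion_subset hLK
  · intro n
    rw [dense_iff_inter_open]
    rintro U hU ⟨⟨x, hxK⟩, hxU⟩
    obtain ⟨V, hV, rfl⟩ := isOpen_induced_iff.1 hU
    have hxV : x ∈ V := hxU
    have := hLU n V hV ⟨x, hxK, hxV⟩
    obtain ⟨y, hyL, hyV⟩ := nonempty_of_measure_ne_zero this.ne'
    exact ⟨⟨y, hLK n hyL⟩, hyV, hyL⟩
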